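/- The one-breakpoint piecewise linear approximation error is bounded by a quarter of the interval length: sup_{s ∈ (a, b]} δ_Y(s) ≤ (b − a)/4. -/

import Mathlib

open MeasureTheory

/-- Arithmetic core: if `D ≤ x*p`, `D ≤ y*(1-p)` with `0 ≤ D`, `0 ≤ x`, `0 ≤ y`,
`0 ≤ p ≤ 1`, then `D ≤ (x+y)/4`. -/
lemma quarter_arith {D x y p : ℝ} (hD0 : 0 ≤ D) (hx : 0 ≤ x) (hy : 0 ≤ y)
    (hp0 : 0 ≤ p) (hp1 : p ≤ 1) (h1 : D ≤ x * p) (h2 : D ≤ y * (1 - p)) :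
    D ≤ (x + y) / 4 := by
  nlinarith [sq_nonneg (x - y), sq_nonneg (x*p - y*(1-p)), sq_nonneg (x + y),
    mul_le_mul h1 h2 hD0 (mul_nonneg hx hp0), sq_nonneg (2*p - 1),
    mul_nonneg hx hy, mul_nonneg (mul_nonneg hx hy) (mul_nonneg hp0 (by linarith : (0:ℝ) ≤ 1 - p))]

/-- With `Y` integrable, `P(a < Y ≤ b) = 1`, `μ = E[Y]` and
`δ_Y(s) = |min(s,μ) − E[min(s,Y)]|`, the one-breakpoint piecewise-linear approximation
error is bounded by a quarter of the interval length:
`sup_{s ∈ (a,b]} δ_Y(s) ≤ (b − a)/4`. -/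
theorem delta_le_quarter {Ω : Type*} [MeasurableSpace Ω]
    (P : Measure Ω) [IsProbabilityMeasure P]
    (a b : ℝ) (hab : a < b)
    (Y : Ω → ℝ) (hY : Integrable Y P)
    (hsupp : P {ω | Y ω ∈ Set.Ioc a b} = 1) :
    ∀ s ∈ Set.Ioc a b,
      |min s (∫ ω, Y ω ∂P) - ∫ ω, min s (Y ω) ∂P| ≤ (b - a) / 4 := by
  intro s hs
  obtain ⟨hsa, hsb⟩ := hs
  -- measurable modification of Y
  set Y' : Ω → ℝ := hY.1.mk Y with hY'def
  have hYeq : Y =ᵐ[P] Y' := hY.1.ae_eq_mk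
  have hY'sm : StronglyMeasurable Y' := hY.1.stronglyMeasurable_mk
  have hY'int : Integrable Y' P := hY.congr hYeq
  -- a.e. membership in Ioc a b
  have hsets : {ω | Y ω ∈ Set.Ioc a b} =ᵐ[P] {ω | Y' ω ∈ Set.Ioc a b} := by
    rw [Filter.eventuallyEq_set]
    exact hYeq.mono fun ω h => by simp [Set.mem_setOf_eq, h]
  have hsupp' : P {ω | Y' ω ∈ Set.Ioc a b} = 1 := by
    rw [← measure_congr hsets]; exact hsupp
  have hmeasIoc : MeasurableSet {ω | Y' ω ∈ Set.Ioc a b} :=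
    hY'sm.measurable measurableSet_Ioc
  have hae : ∀ᵐ ω ∂P, Y' ω ∈ Set.Ioc a b := by
    rw [ae_iff]
    have : P {ω | Y' ω ∈ Set.Ioc a b}ᶜ = 0 := by
      rw [measure_compl hmeasIoc (measure_ne_top _ _), hsupp', measure_univ]
      simp
    simpa [Set.compl_setOf] using this
  have haY : ∀ᵐ ω ∂P, a < Y' ω := hae.mono fun ω h => h.1
  have hYb : ∀ᵐ ω ∂P, Y' ω ≤ b := hae.mono fun ω h => h.2
  set μ : ℝ := ∫ ω, Y ω ∂P with hμdef
  have hμ' : μ = ∫ ω, Y' ω ∂P := integral_congr_ae hYeq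
  set A : Set Ω := {ω | Y' ω ≤ s} with hAdef
  have hAmeas : MeasurableSet A := hY'sm.measurable measurableSet_Iic
  set p : ℝ := (P A).toReal with hpdef
  have hp0 : 0 ≤ p := ENNReal.toReal_nonneg
  have hp1 : p ≤ 1 := by
    rw [hpdef]
    exact ENNReal.toReal_le_of_le_ofReal zero_le_one (by simpa using prob_le_one)
  have hpc : (P Aᶜ).toReal = 1 - p := by
    rw [measure_compl hAmeas (measure_ne_top _ _), measure_univ, hpdef,
      ENNReal.toReal_sub_of_le prob_le_one (by simp)]
    simp
  -- the positive parts
  set f : Ω → ℝ := fun ω => max (s - Y' ω) 0 with hfdef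
  set g : Ω → ℝ := fun ω => max (Y' ω - s) 0 with hgdef
  have hfint : Integrable f P := ((integrable_const s).sub hY'int).pos_part
  have hgint : Integrable g P := (hY'int.sub (integrable_const s)).pos_part
  have hf0 : 0 ≤ ∫ ω, f ω ∂P := integral_nonneg fun ω => le_max_right _ _
  have hg0 : 0 ≤ ∫ ω, g ω ∂P := integral_nonneg fun ω => le_max_right _ _
  -- ∫ f = ∫ g + (s - μ)
  have hint1 : ∫ ω, f ω ∂P = (∫ ω, g ω ∂P) + (s - μ) := by
    have heq : ∀ ω, f ω = g ω + (s - Y' ω) := by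
      intro ω
      rcases le_total (Y' ω) s with h | h <;>
        simp [hfdef, hgdef, max_eq_left, max_eq_right, sub_nonneg.2 h, sub_nonpos.2 h] <;>
        linarith
    calc ∫ ω, f ω ∂P = ∫ ω, (g ω + (s - Y' ω)) ∂P := integral_congr_ae (.of_forall heq)
      _ = (∫ ω, g ω ∂P) + ∫ ω, (s - Y' ω) ∂P :=
          integral_add hgint ((integrable_const s).sub hY'int)
      _ = (∫ ω, g ω ∂P) + (s - μ) := by
          rw [integral_sub (integrable_const s) hY'int, integral_const, hμ']
          simp
  -- bound: ∫ f ≤ (s - a) * p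
  have hfle : ∫ ω, f ω ∂P ≤ (s - a) * p := by
    have hbound : ∀ᵐ ω ∂P, f ω ≤ A.indicator (fun _ => s - a) ω := by
      refine haY.mono fun ω h => ?_
      by_cases hA : ω ∈ A
      · rw [Set.indicator_of_mem hA]
        have : Y' ω ≤ s := hA
        simp only [hfdef]
        rw [max_le_iff]
        constructor <;> linarith
      · rw [Set.indicator_of_notMem hA]
        have : s < Y' ω := lt_of_not_ge hA
        simp only [hfdef]
        rw [max_le_iff]
        constructor <;> linarith
    calc ∫ ω, f ω ∂P ≤ ∫ ω, A.indicator (fun _ => s - a) ω ∂P :=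
          integral_mono_ae hfint ((integrable_const _).indicator hAmeas) hbound
      _ = (s - a) * p := by
          rw [integral_indicator_const _ hAmeas]
          simp [hpdef, mul_comm, measureReal_def]
  -- bound: ∫ g ≤ (b - s) * (1 - p)
  have hgle : ∫ ω, g ω ∂P ≤ (b - s) * (1 - p) := by
    have hbound : ∀ᵐ ω ∂P, g ω ≤ Aᶜ.indicator (fun _ => b - s) ω := by
      refine hYb.mono fun ω h => ?_
      by_cases hA : ω ∈ A
      · rw [Set.indicator_of_notMem (by simpa using hA)]
        have : Y' ω ≤ s := hA
        simp only [hgdef]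
        rw [max_le_iff]
        constructor <;> linarith
      · rw [Set.indicator_of_mem (by simpa using hA)]
        simp only [hgdef]
        rw [max_le_iff]
        constructor <;> linarith
    calc ∫ ω, g ω ∂P ≤ ∫ ω, Aᶜ.indicator (fun _ => b - s) ω ∂P :=
          integral_mono_ae hgint ((integrable_const _).indicator hAmeas.compl) hbound
      _ = (b - s) * (1 - p) := by
          rw [integral_indicator_const _ hAmeas.compl, measureReal_def, hpc]
          simp [mul_comm]
  -- rewrite the target
  have hminY : ∫ ω, min s (Y ω) ∂P = s - ∫ ω, f ω ∂P := by
    have h2 : ∫ ω, min s (Y ω) ∂P = ∫ ω, (s - f ω) ∂P := by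
      refine integral_congr_ae (hYeq.mono fun ω h => ?_)
      rcases le_total (Y' ω) s with h' | h' <;>
        simp [h, hfdef, min_eq_left, min_eq_right, max_eq_left, max_eq_right,
          sub_nonneg.2 h', sub_nonpos.2 h', h'] <;> linarith
    rw [h2, integral_sub (integrable_const s) hfint, integral_const]
    simp
  have hminμ : min s μ = s - max (s - μ) 0 := by
    rcases le_total μ s with h | h
    · rw [min_eq_right h, max_eq_left (by linarith)]; ring
    · rw [min_eq_left h, max_eq_right (by linarith)]; ring
  set D : ℝ := (∫ ω, f ω ∂P) - max (s - μ) 0 with hDdef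
  have htarget : min s μ - ∫ ω, min s (Y ω) ∂P = D := by
    rw [hminY, hminμ, hDdef]; ring
  have hD0 : 0 ≤ D := by
    rcases le_total μ s with h | h
    · rw [hDdef, max_eq_left (by linarith)]
      linarith [hint1, hg0]
    · rw [hDdef, max_eq_right (by linarith)]
      linarith
  have hD1 : D ≤ (s - a) * p := by
    rw [hDdef]
    have := le_max_right (s - μ) (0:ℝ)
    linarith
  have hD2 : D ≤ (b - s) * (1 - p) := by
    rw [hDdef]
    have := le_max_left (s - μ) (0:ℝ)
    linarith [hint1, hgle]
  rw [htarget, abs_of_nonneg hD0]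
  have := quarter_arith hD0 (by linarith : (0:ℝ) ≤ s - a) (by linarith : (0:ℝ) ≤ b - s)
    hp0 hp1 hD1 hD2
  linarith
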